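/- arXiv:1608.02794 — 3 statements merged into one kernel-verified Lean document; each statement's English description precedes it below -/
import Mathlib

section
/- Let α ∈ (0,1) and let l ≥ 1 be an integer. For h ∈ ℝ^m and g : ℝ^m → ℝ define Δ_h g(x) := g(x+h) − g(x) and let Δ_h^l denote the l-fold iterate of Δ_h. Then there exists a constant C_{l,α} > 1 (depending only on l and α) such that for every bounded α-Hölder continuous function g : ℝ^m → ℝ, setting ‖g‖_{α,Δ,l} := sup_x |g(x)| + sup_{x ∈ ℝ^m, h ∈ ℝ^m, h ≠ 0} |Δ_h^l g(x)| / |h|^α, one has C_{l,α}^{−1} ‖g‖_{C^α} ≤ ‖g‖_{α,Δ,l} ≤ C_{l,α} ‖g‖_{C^α}. -/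
open Set Finset Polynomial

noncomputable section

/-- The `l`-fold iterated difference operator `Δ_h^l g`. -/
def iterDiff {E : Type*} [AddCommGroup E] (h : E) (l : ℕ) (g : E → ℝ) : E → ℝ :=
  (fun u : E → ℝ => fun x => u (x + h) - u x)^[l] g

/-- The Hölder norm `‖g‖_{C^α} = sup |g| + sup_{x ≠ y} |g x - g y| / |x - y|^α`. -/
def cAlphaNorm {E : Type*} [NormedAddCommGroup E] (α : ℝ) (g : E → ℝ) : ℝ :=
  sSup {r : ℝ | ∃ x : E, r = |g x|} +
    sSup {r : ℝ | ∃ x y : E, x ≠ y ∧ r = |g x - g y| / ‖x - y‖ ^ α}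

/-- The norm `‖g‖_{α,Δ,l} = sup |g| + sup_{x, h ≠ 0} |Δ_h^l g x| / |h|^α`. -/
def deltaNorm {E : Type*} [NormedAddCommGroup E] (α : ℝ) (l : ℕ) (g : E → ℝ) : ℝ :=
  sSup {r : ℝ | ∃ x : E, r = |g x|} +
    sSup {r : ℝ | ∃ x h : E, h ≠ 0 ∧ r = |iterDiff h l g x| / ‖h‖ ^ α}

section Alg
variable {E : Type*} [AddCommGroup E]

def shiftL (h : E) : (E → ℝ) →ₗ[ℝ] (E → ℝ) where
  toFun u := fun x => u (x + h)
  map_add' _ _ := rfl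
  map_smul' _ _ := rfl

lemma iterDiff_eq_pow (h : E) (l : ℕ) (g : E → ℝ) :
    iterDiff h l g = ((shiftL h - 1 : Module.End ℝ (E → ℝ))^l) g := by
  induction l with
  | zero => simp [iterDiff]
  | succ n ih =>
    rw [iterDiff, Function.iterate_succ_apply', pow_succ', Module.End.mul_apply,
      ← iterDiff, ih]
    rfl

lemma poly_id (k : ℕ) : ((X:ℝ[X])^2 - 1)^k
    = ∑ j ∈ Finset.range (k+1), ((k.choose j : ℝ) * 2^(k-j)) • ((X:ℝ[X])-1)^(k+j) := by
  have h : ((X:ℝ[X])^2 - 1) = ((X-1)^2) + (2*(X-1)) := by ring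
  rw [h, add_pow]
  refine Finset.sum_congr rfl fun j hj => ?_
  have hjk : j ≤ k := Nat.lt_succ_iff.mp (Finset.mem_range.mp hj)
  have e1 : k + j = 2*j + (k-j) := by omega
  rw [e1, pow_add, mul_pow, Polynomial.smul_eq_C_mul, map_mul, map_pow, ← pow_mul]
  have h1 : (Polynomial.C ((k.choose j : ℝ))) = ((k.choose j : ℕ) : ℝ[X]) := map_natCast _ _
  have h2 : (Polynomial.C (2:ℝ)) = (2 : ℝ[X]) := map_ofNat _ _
  rw [h1, h2]
  ring

lemma doubling (h : E) (k : ℕ) (g : E → ℝ) (x : E) :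
    iterDiff (h + h) k g x = ∑ j ∈ Finset.range (k+1),
      ((k.choose j : ℝ) * 2^(k-j)) * iterDiff h (k+j) g x := by
  have hs : (shiftL (h+h) : Module.End ℝ (E → ℝ)) = (shiftL h)^2 := by
    refine LinearMap.ext fun u => funext fun y => ?_
    show u (y + (h + h)) = u (y + h + h)
    rw [add_assoc]
  have key : ((shiftL (h+h) - 1 : Module.End ℝ (E → ℝ)))^k
      = ∑ j ∈ Finset.range (k+1),
        ((k.choose j : ℝ) * 2^(k-j)) • ((shiftL h - 1 : Module.End ℝ (E → ℝ)))^(k+j) := by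
    have := congrArg (Polynomial.aeval (shiftL h : Module.End ℝ (E → ℝ))) (poly_id k)
    simpa [map_pow, map_sub, map_sum, hs] using this
  rw [iterDiff_eq_pow, key]
  simp only [LinearMap.sum_apply, LinearMap.smul_apply, iterDiff_eq_pow]
  rw [Finset.sum_apply]
  simp [smul_eq_mul]

lemma iterDiff_succ' (h : E) (k : ℕ) (g : E → ℝ) (x : E) :
    iterDiff h (k+1) g x = iterDiff h k g (x + h) - iterDiff h k g x := by
  rw [iterDiff, Function.iterate_succ_apply']; rfl

lemma iterDiff_add_eq (h : E) (a b : ℕ) (g : E → ℝ) :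
    iterDiff h (a + b) g = iterDiff h a (iterDiff h b g) :=
  Function.iterate_add_apply _ a b g

lemma iterDiff_abs_le (h : E) (k : ℕ) (u : E → ℝ) (B : ℝ) (hB : ∀ x, |u x| ≤ B) :
    ∀ x, |iterDiff h k u x| ≤ 2^k * B := by
  induction k with
  | zero => intro x; simpa [iterDiff] using hB x
  | succ n ih =>
    intro x
    rw [iterDiff_succ']
    calc |iterDiff h n u (x + h) - iterDiff h n u x|
        ≤ |iterDiff h n u (x + h)| + |iterDiff h n u x| := abs_sub _ _
      _ ≤ 2^n * B + 2^n * B := add_le_add (ih _) (ih _)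
      _ = 2^(n+1) * B := by ring
end Alg

lemma key_claim (l : ℕ) (α : ℝ) (hα : α ∈ Ioo (0:ℝ) 1) :
    ∀ j : ℕ, ∃ K : ℝ, 1 ≤ K ∧ ∀ (E : Type) (_ : NormedAddCommGroup E), ∀ (_ : @NormedSpace ℝ E _ _),
      ∀ (g : E → ℝ) (M D : ℝ), 0 ≤ D → (∀ x, |g x| ≤ M) →
      (∀ (x h : E), h ≠ 0 → |iterDiff h l g x| ≤ D * ‖h‖ ^ α) →
      ∀ k, k + j = l → 1 ≤ k →
      ∀ (x h : E), h ≠ 0 → |iterDiff h k g x| ≤ K * (M + D) * ‖h‖ ^ α := by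
  obtain ⟨hα0, hα1⟩ := hα
  intro j
  induction j with
  | zero =>
    refine ⟨1, le_refl 1, ?_⟩
    intro E _inst _inst2 g M D hD hM hiter k hkl hk1 x h hh
    have hkeq : k = l := by omega
    subst hkeq
    have hM0 : 0 ≤ M := (abs_nonneg _).trans (hM x)
    have hpow : (0:ℝ) ≤ ‖h‖ ^ α := Real.rpow_nonneg (norm_nonneg _) _
    have h1 := hiter x h hh
    nlinarith
  | succ j ih =>
    obtain ⟨K', hK'1, hK'⟩ := ih
    set q : ℝ := (2:ℝ) ^ (α - 1) with hqdef
    have hq0 : 0 < q := Real.rpow_pos_of_pos two_pos _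
    have hq1 : q < 1 := by
      apply Real.rpow_lt_one_of_one_lt_of_neg one_lt_two (by linarith)
    have hinv : 0 < (1 - q)⁻¹ := inv_pos.mpr (by linarith)
    have hKK : (1:ℝ) ≤ 2^l + 4^l * K' * (1-q)⁻¹ := by
      have h1 : (1:ℝ) ≤ 2^l := by
        calc (1:ℝ) = 1^l := (one_pow l).symm
        _ ≤ 2^l := pow_le_pow_left₀ (by norm_num) one_le_two l
      have h2 : (0:ℝ) ≤ 4^l * K' * (1-q)⁻¹ := by positivity
      linarith
    refine ⟨2^l + 4^l * K' * (1-q)⁻¹, hKK, ?_⟩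
    intro E _inst _inst2 g M D hD hM hiter k hkl hk1 x h hh
    have hkl' : k ≤ l := by omega
    have hM0 : 0 ≤ M := (abs_nonneg _).trans (hM x)
    -- bound on (k+1+i)-th differences
    have hhi : ∀ (i : ℕ) (x : E) (h : E), h ≠ 0 →
        |iterDiff h (k + (i+1)) g x| ≤ 2^i * (K' * (M + D) * ‖h‖ ^ α) := by
      intro i x h hh
      have hk1' := hK' E ‹_› ‹_› g M D hD hM hiter (k+1) (by omega) (by omega)
      have : k + (i+1) = i + (k+1) := by omega
      rw [this, iterDiff_add_eq]
      exact iterDiff_abs_le h i _ _ (fun y => hk1' y h hh) x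
    -- the doubling inequality
    have star : ∀ (x h : E), h ≠ 0 →
        (2:ℝ)^k * |iterDiff h k g x| ≤ |iterDiff (h+h) k g x| + 4^k * (K' * (M + D) * ‖h‖ ^ α) := by
      intro x h hh
      have hid := doubling h k g x
      rw [Finset.sum_range_succ'] at hid
      simp only [Nat.choose_zero_right, Nat.sub_zero, Nat.cast_one, one_mul, Nat.add_zero] at hid
      have h2 : (2:ℝ)^k * iterDiff h k g x = iterDiff (h+h) k g x
          - ∑ i ∈ Finset.range k, ((k.choose (i+1) : ℝ) * 2^(k-(i+1))) * iterDiff h (k+(i+1)) g x := by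
        rw [hid]; ring
      have hsum : |∑ i ∈ Finset.range k, ((k.choose (i+1) : ℝ) * 2^(k-(i+1))) * iterDiff h (k+(i+1)) g x|
          ≤ 4^k * (K' * (M + D) * ‖h‖ ^ α) := by
        calc |∑ i ∈ Finset.range k, ((k.choose (i+1) : ℝ) * 2^(k-(i+1))) * iterDiff h (k+(i+1)) g x|
            ≤ ∑ i ∈ Finset.range k, |((k.choose (i+1) : ℝ) * 2^(k-(i+1))) * iterDiff h (k+(i+1)) g x| :=
              Finset.abs_sum_le_sum_abs _ _
          _ ≤ ∑ i ∈ Finset.range k, ((k.choose (i+1) : ℝ) * 2^(k-(i+1))) * (2^i * (K' * (M + D) * ‖h‖ ^ α)) := by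
              refine Finset.sum_le_sum fun i hi => ?_
              rw [abs_mul]
              have hc : |((k.choose (i+1) : ℝ) * 2^(k-(i+1)))| = (k.choose (i+1) : ℝ) * 2^(k-(i+1)) := by
                rw [abs_of_nonneg]; positivity
              rw [hc]
              exact mul_le_mul_of_nonneg_left (hhi i x h hh) (by positivity)
          _ = (∑ i ∈ Finset.range k, ((k.choose (i+1) : ℝ) * 2^(k-(i+1)) * 2^i)) * (K' * (M + D) * ‖h‖ ^ α) := by
              rw [Finset.sum_mul]; exact Finset.sum_congr rfl fun i _ => by ring
          _ ≤ 4^k * (K' * (M + D) * ‖h‖ ^ α) := by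
              apply mul_le_mul_of_nonneg_right _ (by positivity)
              have heach : ∀ i ∈ Finset.range k, ((k.choose (i+1) : ℝ) * 2^(k-(i+1)) * 2^i)
                  = (k.choose (i+1) : ℝ) * 2^(k-1) := by
                intro i hi
                have : k - (i+1) + i = k - 1 := by
                  have := Finset.mem_range.mp hi; omega
                rw [mul_assoc, ← pow_add, this]
              rw [Finset.sum_congr rfl heach, ← Finset.sum_mul]
              have hchoose : (∑ i ∈ Finset.range k, (k.choose (i+1) : ℝ)) ≤ 2^k := by
                have hnat : (∑ i ∈ Finset.range k, k.choose (i+1)) ≤ 2^k := by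
                  have h1 : (∑ i ∈ Finset.range (k+1), k.choose i) = 2^k := Nat.sum_range_choose k
                  have h2 : (∑ i ∈ Finset.range (k+1), k.choose i)
                      = (∑ i ∈ Finset.range k, k.choose (i+1)) + k.choose 0 := Finset.sum_range_succ' _ _
                  omega
                calc (∑ i ∈ Finset.range k, (k.choose (i+1) : ℝ))
                    = ((∑ i ∈ Finset.range k, k.choose (i+1) : ℕ) : ℝ) := by push_cast; ring
                  _ ≤ ((2^k : ℕ) : ℝ) := by exact_mod_cast hnat
                  _ = 2^k := by push_cast; ring
              calc (∑ i ∈ Finset.range k, (k.choose (i+1) : ℝ)) * 2^(k-1)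
                  ≤ 2^k * 2^(k-1) := by
                    apply mul_le_mul_of_nonneg_right hchoose (by positivity)
                _ ≤ 2^k * 2^k := by
                    apply mul_le_mul_of_nonneg_left _ (by positivity)
                    apply pow_le_pow_right₀ one_le_two (by omega)
                _ = 4^k := by rw [← mul_pow]; norm_num
      calc (2:ℝ)^k * |iterDiff h k g x| = |(2:ℝ)^k * iterDiff h k g x| := by
            rw [abs_mul, abs_of_nonneg (by positivity : (0:ℝ) ≤ 2^k)]
        _ ≤ |iterDiff (h+h) k g x| + |∑ i ∈ Finset.range k, ((k.choose (i+1) : ℝ) * 2^(k-(i+1))) * iterDiff h (k+(i+1)) g x| := by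
            rw [h2]; exact abs_sub _ _
        _ ≤ _ := by linarith [hsum]
    -- the iteration
    set A : ℝ := 4^k * (K' * (M + D)) with hAdef
    have hA0 : 0 ≤ A := by positivity
    have hDM0 : 0 ≤ M + D := by linarith
    have P : ∀ n : ℕ, ∀ (x h : E), h ≠ 0 →
        |iterDiff h k g x| ≤ 2^k * M * (2⁻¹:ℝ)^n + A * (1-q)⁻¹ * ‖h‖ ^ α := by
      intro n
      induction n with
      | zero =>
        intro x h hh
        have := iterDiff_abs_le h k g M hM x
        have hpow : (0:ℝ) ≤ ‖h‖ ^ α := Real.rpow_nonneg (norm_nonneg _) _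
        have : |iterDiff h k g x| ≤ 2^k * M := this
        have h2 : 0 ≤ A * (1-q)⁻¹ * ‖h‖ ^ α := mul_nonneg (mul_nonneg hA0 hinv.le) hpow
        simpa using by linarith
      | succ n ihn =>
        intro x h hh
        have hhh : h + h ≠ 0 := by
          rw [← two_smul ℝ h]
          exact smul_ne_zero two_ne_zero hh
        have h1 := star x h hh
        have h2 := ihn x (h+h) hhh
        have hnorm2 : ‖h + h‖ ^ α = (2:ℝ)^(α:ℝ) * ‖h‖ ^ α := by
          rw [← two_smul ℝ h, norm_smul]
          simp only [Real.norm_ofNat]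
          rw [Real.mul_rpow (by norm_num) (norm_nonneg _)]
        rw [hnorm2] at h2
        -- combine: 2^k |iterDiff h k g x| ≤ |iterDiff (h+h) k g x| + A‖h‖^α
        -- ≤ 2^k M 2⁻ⁿ + A(1-q)⁻¹ 2^α ‖h‖^α + A ‖h‖^α
        have hq2 : (2:ℝ)^(α:ℝ) = 2 * q := by
          rw [hqdef, ← Real.rpow_one_add' (by norm_num) (by intro hc; linarith)]
          norm_num
        have hk2 : (2:ℝ) ≤ 2^k := by
          calc (2:ℝ) = 2^1 := (pow_one 2).symm
          _ ≤ 2^k := pow_le_pow_right₀ one_le_two hk1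
        have hpow : (0:ℝ) ≤ ‖h‖ ^ α := Real.rpow_nonneg (norm_nonneg _) _
        have hgeom : A * (1-q)⁻¹ * (2 * q) * ‖h‖ ^ α + 2 * (A * ‖h‖ ^ α)
            = 2 * (A * (1-q)⁻¹ * ‖h‖ ^ α) := by
          have h1q : (1:ℝ) - q ≠ 0 := by intro hc; linarith
          field_simp
          ring
        have h2k0 : (0:ℝ) < 2^k := by positivity
        -- goal times 2^k
        rw [← mul_le_mul_iff_of_pos_left h2k0]
        calc (2:ℝ)^k * |iterDiff h k g x|
            ≤ |iterDiff (h+h) k g x| + A * ‖h‖ ^ α := by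
              have heq : (4:ℝ)^k * (K' * (M + D) * ‖h‖ ^ α) = A * ‖h‖ ^ α := by
                rw [hAdef]; ring
              linarith [h1, heq.le, heq.ge]
          _ ≤ (2^k * M * (2⁻¹:ℝ)^n + A * (1-q)⁻¹ * ((2:ℝ)^(α:ℝ) * ‖h‖ ^ α)) + A * ‖h‖ ^ α := by
              linarith [h2]
          _ ≤ 2^k * (2^k * M * (2⁻¹:ℝ)^(n+1) + A * (1-q)⁻¹ * ‖h‖ ^ α) := by
              rw [hq2]
              have e1 : (2:ℝ)^k * (2^k * M * (2⁻¹:ℝ)^(n+1)) = 2^k * M * ((2⁻¹:ℝ)^n * (2^k * 2⁻¹)) := by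
                rw [pow_succ]; ring
              have e2 : 2^k * M * (2⁻¹:ℝ)^n ≤ 2^k * M * ((2⁻¹:ℝ)^n * (2^k * 2⁻¹)) := by
                have ha : (1:ℝ) ≤ 2^k * 2⁻¹ := by linarith [hk2]
                have hb : (0:ℝ) ≤ 2^k * M * (2⁻¹:ℝ)^n := by positivity
                calc 2^k * M * (2⁻¹:ℝ)^n = (2^k * M * (2⁻¹:ℝ)^n) * 1 := by ring
                  _ ≤ (2^k * M * (2⁻¹:ℝ)^n) * (2^k * 2⁻¹) := mul_le_mul_of_nonneg_left ha hb
                  _ = 2^k * M * ((2⁻¹:ℝ)^n * (2^k * 2⁻¹)) := by ring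
              have e3 : A * (1-q)⁻¹ * (2 * q * ‖h‖ ^ α) + A * ‖h‖ ^ α ≤ 2^k * (A * (1-q)⁻¹ * ‖h‖ ^ α) := by
                have hAq : 0 ≤ A * ‖h‖ ^ α := mul_nonneg hA0 hpow
                have hX : 0 ≤ A * (1-q)⁻¹ * ‖h‖ ^ α := mul_nonneg (mul_nonneg hA0 hinv.le) hpow
                have hkk : (0:ℝ) ≤ (2^k - 2) * (A * (1-q)⁻¹ * ‖h‖ ^ α) :=
                  mul_nonneg (by linarith [hk2]) hX
                nlinarith [hgeom]
              calc 2^k * M * (2⁻¹:ℝ)^n + A * (1-q)⁻¹ * (2 * q * ‖h‖ ^ α) + A * ‖h‖ ^ α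
                  ≤ 2^k * M * ((2⁻¹:ℝ)^n * (2^k * 2⁻¹)) + 2^k * (A * (1-q)⁻¹ * ‖h‖ ^ α) := by
                    linarith [e2, e3]
                _ = 2^k * (2^k * M * (2⁻¹:ℝ)^(n+1) + A * (1-q)⁻¹ * ‖h‖ ^ α) := by
                    rw [pow_succ]; ring
    -- conclude
    have hpow : (0:ℝ) < ‖h‖ ^ α := Real.rpow_pos_of_pos (norm_pos_iff.mpr hh) _
    rcases le_or_gt ‖h‖ 1 with hle | hgt
    · obtain ⟨n, hn⟩ := exists_pow_lt_of_lt_one hpow (by norm_num : (2⁻¹:ℝ) < 1)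
      have := P n x h hh
      have h1 : 2^k * M * (2⁻¹:ℝ)^n ≤ 2^k * M * ‖h‖ ^ α := by
        apply mul_le_mul_of_nonneg_left (le_of_lt hn) (by positivity)
      have hfin : |iterDiff h k g x| ≤ (2^k * M + A * (1-q)⁻¹) * ‖h‖ ^ α := by
        calc |iterDiff h k g x| ≤ 2^k * M * (2⁻¹:ℝ)^n + A * (1-q)⁻¹ * ‖h‖ ^ α := this
          _ ≤ 2^k * M * ‖h‖ ^ α + A * (1-q)⁻¹ * ‖h‖ ^ α := by linarith
          _ = (2^k * M + A * (1-q)⁻¹) * ‖h‖ ^ α := by ring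
      refine hfin.trans ?_
      have e1 : (2:ℝ)^k ≤ 2^l := pow_le_pow_right₀ one_le_two hkl'
      have e2 : (4:ℝ)^k ≤ 4^l := pow_le_pow_right₀ (by norm_num) hkl'
      have t1 : (2:ℝ)^k * M ≤ 2^l * (M + D) := by
        calc (2:ℝ)^k * M ≤ 2^l * M := mul_le_mul_of_nonneg_right e1 hM0
          _ ≤ 2^l * (M + D) := mul_le_mul_of_nonneg_left (by linarith) (by positivity)
      have e3 : 2^k * M + A * (1-q)⁻¹ ≤ (2^l + 4^l * K' * (1-q)⁻¹) * (M + D) := by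
        rw [hAdef]
        have hc : (0:ℝ) ≤ K' * (M + D) * (1-q)⁻¹ :=
          mul_nonneg (mul_nonneg (by linarith) hDM0) hinv.le
        have t2 : (4:ℝ)^k * (K' * (M + D)) * (1-q)⁻¹ ≤ 4^l * K' * (1-q)⁻¹ * (M + D) := by
          calc (4:ℝ)^k * (K' * (M + D)) * (1-q)⁻¹ = 4^k * (K' * (M + D) * (1-q)⁻¹) := by ring
            _ ≤ 4^l * (K' * (M + D) * (1-q)⁻¹) := mul_le_mul_of_nonneg_right e2 hc
            _ = 4^l * K' * (1-q)⁻¹ * (M + D) := by ring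
        have hr : (2^l + 4^l * K' * (1-q)⁻¹) * (M + D)
            = 2^l * (M + D) + 4^l * K' * (1-q)⁻¹ * (M + D) := by ring
        linarith
      calc (2^k * M + A * (1-q)⁻¹) * ‖h‖ ^ α
          ≤ ((2^l + 4^l * K' * (1-q)⁻¹) * (M + D)) * ‖h‖ ^ α :=
            mul_le_mul_of_nonneg_right e3 hpow.le
        _ = (2^l + 4^l * K' * (1-q)⁻¹) * (M + D) * ‖h‖ ^ α := by ring
    · have hone : (1:ℝ) ≤ ‖h‖ ^ α := by
        have : (1:ℝ)^α ≤ ‖h‖ ^ α := Real.rpow_le_rpow (by norm_num) hgt.le hα0.le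
        simpa using this
      have htriv := iterDiff_abs_le h k g M hM x
      have e1 : (2:ℝ)^k ≤ 2^l := pow_le_pow_right₀ one_le_two hkl'
      have t1 : (2:ℝ)^k * M ≤ 2^l * (M + D) := by
        calc (2:ℝ)^k * M ≤ 2^l * M := mul_le_mul_of_nonneg_right e1 hM0
          _ ≤ 2^l * (M + D) := mul_le_mul_of_nonneg_left (by linarith) (by positivity)
      have h4 : (0:ℝ) ≤ 4^l * K' * (1-q)⁻¹ :=
        mul_nonneg (mul_nonneg (by positivity) (by linarith)) hinv.le
      have base : (2:ℝ)^k * M ≤ (2^l + 4^l * K' * (1-q)⁻¹) * (M + D) := by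
        have hr : (2^l + 4^l * K' * (1-q)⁻¹) * (M + D)
            = 2^l * (M + D) + 4^l * K' * (1-q)⁻¹ * (M + D) := by ring
        have h5 : (0:ℝ) ≤ 4^l * K' * (1-q)⁻¹ * (M + D) := mul_nonneg h4 hDM0
        linarith
      have hbase0 : (0:ℝ) ≤ (2^l + 4^l * K' * (1-q)⁻¹) * (M + D) :=
        le_trans (by positivity) base
      calc |iterDiff h k g x| ≤ 2^k * M := htriv
        _ ≤ (2^l + 4^l * K' * (1-q)⁻¹) * (M + D) := base
        _ ≤ (2^l + 4^l * K' * (1-q)⁻¹) * (M + D) * ‖h‖ ^ α :=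
            le_mul_of_one_le_right hbase0 hone

lemma iterDiff_holder_bound {E : Type*} [NormedAddCommGroup E] (h : E) (l : ℕ) (hl : 1 ≤ l)
    (g : E → ℝ) (M : ℝ) (α : ℝ) (hM1 : ∀ x y, |g x - g y| ≤ M * ‖x - y‖ ^ α) :
    ∀ x, |iterDiff h l g x| ≤ 2^(l-1) * (M * ‖h‖ ^ α) := by
  intro x
  have he : l = (l - 1) + 1 := by omega
  rw [he, iterDiff_add_eq]
  apply iterDiff_abs_le
  intro y
  have : iterDiff h 1 g y = g (y + h) - g y := rfl
  rw [this]
  have := hM1 (y + h) y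
  rwa [add_sub_cancel_left] at this

/-- For `α ∈ (0,1)` and an integer `l ≥ 1`, there is a constant
`C_{l,α} > 1`, depending only on `l` and `α`, such that for every bounded `α`-Hölder
continuous `g : ℝ^m → ℝ` one has
`C_{l,α}⁻¹ ‖g‖_{C^α} ≤ ‖g‖_{α,Δ,l} ≤ C_{l,α} ‖g‖_{C^α}`. -/
theorem iterated_difference_norm_equiv (l : ℕ) (hl : 1 ≤ l) (α : ℝ) (hα : α ∈ Ioo (0:ℝ) 1) :
    ∃ C > 1, ∀ (m : ℕ) (g : EuclideanSpace ℝ (Fin m) → ℝ),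
      (∃ M : ℝ, (∀ x, |g x| ≤ M) ∧ ∀ x y, |g x - g y| ≤ M * ‖x - y‖ ^ α) →
      C⁻¹ * cAlphaNorm α g ≤ deltaNorm α l g ∧ deltaNorm α l g ≤ C * cAlphaNorm α g := by
  obtain ⟨K, hK1, hK⟩ := key_claim l α hα (l-1)
  have h2l : (1:ℝ) ≤ 2^l := by
    calc (1:ℝ) = 1^l := (one_pow l).symm
    _ ≤ 2^l := pow_le_pow_left₀ (by norm_num) one_le_two l
  have hC0 : (0:ℝ) < K + 2^l := by linarith
  refine ⟨K + 2^l, by linarith, ?_⟩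
  intro m g hg
  obtain ⟨M, hM0, hM1⟩ := hg
  unfold cAlphaNorm deltaNorm
  set T0 : Set ℝ := {r : ℝ | ∃ x : EuclideanSpace ℝ (Fin m), r = |g x|} with hT0def
  set T1 : Set ℝ := {r : ℝ | ∃ x y : EuclideanSpace ℝ (Fin m), x ≠ y ∧ r = |g x - g y| / ‖x - y‖ ^ α} with hT1def
  set T2 : Set ℝ := {r : ℝ | ∃ x h : EuclideanSpace ℝ (Fin m), h ≠ 0 ∧ r = |iterDiff h l g x| / ‖h‖ ^ α} with hT2def
  obtain ⟨hα0, hα1⟩ := hα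
  have hbdd0 : BddAbove T0 := by
    refine ⟨M, ?_⟩
    rintro r ⟨x, rfl⟩
    exact hM0 x
  have hne0 : T0.Nonempty := ⟨|g 0|, 0, rfl⟩
  have hS0 : ∀ x, |g x| ≤ sSup T0 := fun x => le_csSup hbdd0 ⟨x, rfl⟩
  have hS00 : 0 ≤ sSup T0 := le_trans (abs_nonneg _) (hS0 0)
  have hbdd1 : BddAbove T1 := by
    refine ⟨M, ?_⟩
    rintro r ⟨x, y, hxy, rfl⟩
    have hpos : (0:ℝ) < ‖x - y‖ ^ α :=
      Real.rpow_pos_of_pos (norm_pos_iff.mpr (sub_ne_zero.mpr hxy)) _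
    exact (div_le_iff₀ hpos).mpr (hM1 x y)
  have hS10 : 0 ≤ sSup T1 := by
    apply Real.sSup_nonneg
    rintro r ⟨x, y, hxy, rfl⟩
    exact div_nonneg (abs_nonneg _) (Real.rpow_nonneg (norm_nonneg _) _)
  have hS1 : ∀ x y, |g x - g y| ≤ sSup T1 * ‖x - y‖ ^ α := by
    intro x y
    rcases eq_or_ne x y with rfl | hxy
    · simp only [sub_self, abs_zero]
      exact mul_nonneg hS10 (Real.rpow_nonneg (norm_nonneg _) _)
    · have hpos : (0:ℝ) < ‖x - y‖ ^ α :=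
        Real.rpow_pos_of_pos (norm_pos_iff.mpr (sub_ne_zero.mpr hxy)) _
      have hmem : |g x - g y| / ‖x - y‖ ^ α ∈ T1 := ⟨x, y, hxy, rfl⟩
      exact (div_le_iff₀ hpos).mp (le_csSup hbdd1 hmem)
  have hbdd2 : BddAbove T2 := by
    refine ⟨2^(l-1) * M, ?_⟩
    rintro r ⟨x, h, hh, rfl⟩
    have hpos : (0:ℝ) < ‖h‖ ^ α := Real.rpow_pos_of_pos (norm_pos_iff.mpr hh) _
    rw [div_le_iff₀ hpos]
    have := iterDiff_holder_bound h l hl g M α hM1 x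
    calc |iterDiff h l g x| ≤ 2^(l-1) * (M * ‖h‖ ^ α) := this
      _ = 2^(l-1) * M * ‖h‖ ^ α := by ring
  have hS20 : 0 ≤ sSup T2 := by
    apply Real.sSup_nonneg
    rintro r ⟨x, h, hh, rfl⟩
    exact div_nonneg (abs_nonneg _) (Real.rpow_nonneg (norm_nonneg _) _)
  have hS2 : ∀ (x h : EuclideanSpace ℝ (Fin m)), h ≠ 0 →
      |iterDiff h l g x| ≤ sSup T2 * ‖h‖ ^ α := by
    intro x h hh
    have hpos : (0:ℝ) < ‖h‖ ^ α := Real.rpow_pos_of_pos (norm_pos_iff.mpr hh) _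
    have hmem : |iterDiff h l g x| / ‖h‖ ^ α ∈ T2 := ⟨x, h, hh, rfl⟩
    exact (div_le_iff₀ hpos).mp (le_csSup hbdd2 hmem)
  -- upper bound
  have hup : sSup T2 ≤ 2^(l-1) * sSup T1 := by
    apply Real.sSup_le
    · rintro r ⟨x, h, hh, rfl⟩
      have hpos : (0:ℝ) < ‖h‖ ^ α := Real.rpow_pos_of_pos (norm_pos_iff.mpr hh) _
      rw [div_le_iff₀ hpos]
      have := iterDiff_holder_bound h l hl g (sSup T1) α hS1 x
      calc |iterDiff h l g x| ≤ 2^(l-1) * (sSup T1 * ‖h‖ ^ α) := this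
        _ = 2^(l-1) * sSup T1 * ‖h‖ ^ α := by ring
    · exact mul_nonneg (by positivity) hS10
  -- lower bound via key claim
  have h1diff := hK (EuclideanSpace ℝ (Fin m)) inferInstance inferInstance g (sSup T0) (sSup T2) hS20 hS0 hS2
    1 (by omega) le_rfl
  have hlow : sSup T1 ≤ K * (sSup T0 + sSup T2) := by
    apply Real.sSup_le
    · rintro r ⟨x, y, hxy, rfl⟩
      have hpos : (0:ℝ) < ‖x - y‖ ^ α :=
        Real.rpow_pos_of_pos (norm_pos_iff.mpr (sub_ne_zero.mpr hxy)) _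
      rw [div_le_iff₀ hpos]
      have hh : y - x ≠ 0 := sub_ne_zero.mpr (Ne.symm hxy)
      have hd := h1diff x (y - x) hh
      have he : iterDiff (y - x) 1 g x = g y - g x := by
        show g (x + (y - x)) - g x = g y - g x
        have hxy2 : x + (y - x) = y := by abel
        rw [hxy2]
      rw [he] at hd
      rw [abs_sub_comm, norm_sub_rev x y]
      exact hd
    · exact mul_nonneg (by linarith) (by linarith)
  constructor
  · -- C⁻¹ * (S0 + S1) ≤ S0 + S2
    rw [inv_mul_le_iff₀ hC0]
    have hr : (K + 2^l) * (sSup T0 + sSup T2)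
        = K * (sSup T0 + sSup T2) + 2^l * sSup T0 + 2^l * sSup T2 := by ring
    have h5 : sSup T0 ≤ 2^l * sSup T0 := le_mul_of_one_le_left hS00 h2l
    have h6 : 0 ≤ 2^l * sSup T2 := mul_nonneg (by positivity) hS20
    linarith
  · -- S0 + S2 ≤ C * (S0 + S1)
    have h5 : sSup T0 ≤ (K + 2^l) * sSup T0 := le_mul_of_one_le_left hS00 (by linarith)
    have h6 : (2:ℝ)^(l-1) ≤ 2^l := pow_le_pow_right₀ one_le_two (by omega)
    have h7 : 2^(l-1) * sSup T1 ≤ (K + 2^l) * sSup T1 :=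
      mul_le_mul_of_nonneg_right (by linarith) hS10
    have hr : (K + 2^l) * (sSup T0 + sSup T1)
        = (K + 2^l) * sSup T0 + (K + 2^l) * sSup T1 := by ring
    linarith

end
end

section
/- Let g(t) := |t| log(|t| + 2) for t ∈ ℝ. For every integer k ≥ 3 there exists a convex function g_k : ℝ → ℝ of class C² such that g_k(t) = g(t) for all |t| ≥ 1/k, g_k''(t) ≥ 1/3 for all t ∈ [−1,1], and |g_k'(t)| ≤ 4 for all t ∈ [−1,1]. In particular g_k converges pointwise to g as k → ∞. -/
open Set Filter Real Topology


noncomputable def cub (a t : ℝ) : ℝ := a/3 + t^2/a - |t|^3/(3*a^2)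
noncomputable def hh (a t : ℝ) : ℝ := if |t| ≤ a then cub a t else |t|
noncomputable def rr (a t : ℝ) : ℝ := if |t| ≤ a then 2*t/a - t*|t|/a^2 else t/|t|
noncomputable def qq (a t : ℝ) : ℝ := 2 * max (a - |t|) 0 / a^2
noncomputable def ff (s : ℝ) : ℝ := s * Real.log (s + 2)
noncomputable def fd (s : ℝ) : ℝ := Real.log (s + 2) + s/(s+2)
noncomputable def fdd (s : ℝ) : ℝ := 1/(s+2) + 2/(s+2)^2

lemma hasDerivAt_mul_abs (t : ℝ) : HasDerivAt (fun x : ℝ => x * |x|) (2 * |t|) t := by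
  rcases lt_trichotomy t 0 with ht | rfl | ht
  · have h1 : HasDerivAt (fun x : ℝ => -(x * x)) (2 * |t|) t := by
      have := ((hasDerivAt_id t).mul (hasDerivAt_id t)).neg
      refine this.congr_deriv ?_
      simp only [id_eq, one_mul, mul_one]
      rw [abs_of_neg ht]; ring
    apply h1.congr_of_eventuallyEq
    filter_upwards [Iio_mem_nhds ht] with x hx
    rw [abs_of_neg hx]; ring
  · rw [hasDerivAt_iff_tendsto_slope]
    have h2 : ∀ x ∈ ({(0:ℝ)}ᶜ : Set ℝ), |x| = slope (fun x : ℝ => x * |x|) 0 x := by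
      intro x hx
      have hx' : x ≠ 0 := fun h => hx (by simp [h])
      simp only [slope, vsub_eq_sub, mul_zero, abs_zero, sub_zero, smul_eq_mul]
      field_simp
    rw [← tendsto_congr' (eventuallyEq_of_mem self_mem_nhdsWithin h2)]
    have : Tendsto (fun x : ℝ => |x|) (𝓝 0) (𝓝 (|(0:ℝ)|)) := continuous_abs.tendsto 0
    simpa [abs_zero, mul_zero] using this.mono_left nhdsWithin_le_nhds
  · have h1 : HasDerivAt (fun x : ℝ => x * x) (2 * |t|) t := by
      have := (hasDerivAt_id t).mul (hasDerivAt_id t)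
      refine this.congr_deriv ?_
      simp only [id_eq, one_mul, mul_one]
      rw [abs_of_pos ht]; ring
    apply h1.congr_of_eventuallyEq
    filter_upwards [Ioi_mem_nhds ht] with x hx
    rw [abs_of_pos hx]

lemma hasDerivAt_abs_cube (t : ℝ) : HasDerivAt (fun x : ℝ => |x|^3) (3*(t*|t|)) t := by
  rcases lt_trichotomy t 0 with ht | rfl | ht
  · have h1 : HasDerivAt (fun x : ℝ => -(x^3)) (3*(t*|t|)) t := by
      have := (hasDerivAt_pow 3 t).neg
      refine this.congr_deriv ?_
      rw [abs_of_neg ht]; push_cast; ring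
    apply h1.congr_of_eventuallyEq
    filter_upwards [Iio_mem_nhds ht] with x hx
    rw [abs_of_neg hx]; ring
  · rw [hasDerivAt_iff_tendsto_slope]
    have h2 : ∀ x ∈ ({(0:ℝ)}ᶜ : Set ℝ), x * |x| = slope (fun x : ℝ => |x|^3) 0 x := by
      intro x hx
      have hx' : x ≠ 0 := fun h => hx (by simp [h])
      simp only [slope, vsub_eq_sub, abs_zero, sub_zero, smul_eq_mul]
      have h3 : |x|^3 = x^2 * |x| := by rw [← sq_abs]; ring
      rw [h3]
      field_simp
      ring
    rw [← tendsto_congr' (eventuallyEq_of_mem self_mem_nhdsWithin h2)]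
    have : Tendsto (fun x : ℝ => x * |x|) (𝓝 0) (𝓝 (0 * |(0:ℝ)|)) :=
      (continuous_id.mul continuous_abs).tendsto 0
    simpa using this.mono_left nhdsWithin_le_nhds
  · have h1 : HasDerivAt (fun x : ℝ => x^3) (3*(t*|t|)) t := by
      have := hasDerivAt_pow 3 t
      refine this.congr_deriv ?_
      rw [abs_of_pos ht]; push_cast; ring
    apply h1.congr_of_eventuallyEq
    filter_upwards [Ioi_mem_nhds ht] with x hx
    rw [abs_of_pos hx]


variable {a t : ℝ}

lemma hh_eq_of_le (h : |t| ≤ a) : hh a t = cub a t := if_pos h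

lemma hh_eq_abs (ha : 0 < a) (hx : a ≤ |t|) : hh a t = |t| := by
  have ha' := ha.ne'
  unfold hh
  split_ifs with h
  · have hxa : |t| = a := le_antisymm h hx
    unfold cub
    rw [← sq_abs, hxa]
    field_simp
    ring
  · rfl

lemma cub_hasDerivAt (ha : a ≠ 0) (t : ℝ) :
    HasDerivAt (cub a) (2*t/a - t*|t|/a^2) t := by
  have hp : HasDerivAt (fun x : ℝ => x^2) (2*t) t := by
    simpa using hasDerivAt_pow 2 t
  have h1 : HasDerivAt (fun x : ℝ => a/3 + x^2/a - |x|^3/(3*a^2))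
      (2*t/a - 3*(t*|t|)/(3*a^2)) t :=
    ((hp.div_const a).const_add (a/3)).sub ((hasDerivAt_abs_cube t).div_const (3*a^2))
  exact h1.congr_deriv (by rw [mul_div_mul_left _ _ (by norm_num : (3:ℝ) ≠ 0)])

lemma rr_eq_of_le (h : |t| ≤ a) : rr a t = 2*t/a - t*|t|/a^2 := if_pos h
lemma rr_eq_of_gt (h : a < |t|) : rr a t = t/|t| := if_neg (not_le.2 h)

lemma qq_eq_of_le (ha : a ≠ 0) (h : |t| ≤ a) : qq a t = 2/a - 2*|t|/a^2 := by
  unfold qq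
  rw [max_eq_left (sub_nonneg.2 h)]
  field_simp

lemma qq_eq_zero (h : a ≤ |t|) : qq a t = 0 := by
  unfold qq
  rw [max_eq_right (sub_nonpos.2 h), mul_zero, zero_div]

lemma hasDerivAt_hh (ha : 0 < a) (t : ℝ) : HasDerivAt (hh a) (rr a t) t := by
  have ha' := ha.ne'
  rcases lt_trichotomy |t| a with h | h | h
  · rw [rr_eq_of_le h.le]
    apply (cub_hasDerivAt ha' t).congr_of_eventuallyEq
    filter_upwards [(isOpen_lt continuous_abs continuous_const).mem_nhds h] with x hx
    exact hh_eq_of_le (le_of_lt hx)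
  · -- boundary : t = a or t = -a
    rcases (abs_eq ha.le).1 h with h1 | h1
    · -- t = a
      rw [h1]
      have hIic : HasDerivWithinAt (hh a) 1 (Iic a) a := by
        have h1 : HasDerivWithinAt (cub a) (2*a/a - a*|a|/a^2) (Iic a) a :=
          (cub_hasDerivAt ha' a).hasDerivWithinAt
        have h1' : HasDerivWithinAt (cub a) 1 (Iic a) a := by
          convert h1 using 1
          rw [abs_of_pos ha]; field_simp; ring
        apply h1'.congr_of_eventuallyEq ?_ (hh_eq_of_le (by rw [abs_of_pos ha]))
        filter_upwards [mem_nhdsWithin_of_mem_nhds (Ioi_mem_nhds (neg_lt_self ha)),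
          self_mem_nhdsWithin] with x hx1 hx2
        exact hh_eq_of_le (abs_le.2 ⟨le_of_lt hx1, hx2⟩)
      have hIci : HasDerivWithinAt (hh a) 1 (Ici a) a := by
        apply (hasDerivAt_id a).hasDerivWithinAt.congr ?_
          (by rw [hh_eq_abs ha (le_of_eq (abs_of_pos ha).symm), abs_of_pos ha]; rfl)
        intro x hx
        have hax : (0:ℝ) < x := lt_of_lt_of_le ha hx
        rw [hh_eq_abs ha (by rw [abs_of_pos hax]; exact hx), abs_of_pos hax]; rfl
      have hu := hIic.union hIci
      rw [Iic_union_Ici, hasDerivWithinAt_univ] at hu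
      have : rr a a = 1 := by
        rw [rr_eq_of_le (le_of_eq (abs_of_pos ha)), abs_of_pos ha]
        field_simp
        ring
      rwa [this]
    · -- t = -a
      rw [h1]
      have hIic : HasDerivWithinAt (hh a) (-1) (Iic (-a)) (-a) := by
        apply (hasDerivAt_neg (-a)).hasDerivWithinAt.congr ?_
          (by rw [hh_eq_abs ha (by rw [abs_neg, abs_of_pos ha]), abs_neg, abs_of_pos ha, neg_neg])
        intro x hx
        have hax : x ≤ -a := hx
        have hx0 : x < 0 := lt_of_le_of_lt hax (by linarith)
        rw [hh_eq_abs ha (by rw [abs_of_neg hx0]; linarith), abs_of_neg hx0]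
      have hIci : HasDerivWithinAt (hh a) (-1) (Ici (-a)) (-a) := by
        have h1 : HasDerivWithinAt (cub a) (2*(-a)/a - (-a)*|(-a)|/a^2) (Ici (-a)) (-a) :=
          (cub_hasDerivAt ha' (-a)).hasDerivWithinAt
        have h1' : HasDerivWithinAt (cub a) (-1) (Ici (-a)) (-a) := by
          convert h1 using 1
          rw [abs_neg, abs_of_pos ha]; field_simp; ring
        apply h1'.congr_of_eventuallyEq ?_
          (hh_eq_of_le (by rw [abs_neg, abs_of_pos ha]))
        filter_upwards [mem_nhdsWithin_of_mem_nhds (Iio_mem_nhds (neg_lt_self ha)),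
          self_mem_nhdsWithin] with x hx1 hx2
        exact hh_eq_of_le (abs_le.2 ⟨hx2, le_of_lt hx1⟩)
      have hu := hIic.union hIci
      rw [Iic_union_Ici, hasDerivWithinAt_univ] at hu
      have : rr a (-a) = -1 := by
        rw [rr_eq_of_le (by rw [abs_neg, abs_of_pos ha]), abs_neg, abs_of_pos ha]
        field_simp
        ring
      rwa [this]
  · rcases lt_trichotomy 0 t with ht | ht | ht0
    · have hta : a < t := by rwa [abs_of_pos ht] at h
      have : rr a t = 1 := by rw [rr_eq_of_gt h, abs_of_pos ht, div_self ht.ne']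
      rw [this]
      apply (hasDerivAt_id t).congr_of_eventuallyEq
      filter_upwards [Ioi_mem_nhds hta] with x hx
      have hx0 : (0:ℝ) < x := lt_trans ha hx
      rw [hh_eq_abs ha (by rw [abs_of_pos hx0]; exact le_of_lt hx), abs_of_pos hx0]; rfl
    · rw [← ht, abs_zero] at h
      linarith
    · have hta : t < -a := by
        rw [abs_of_neg ht0] at h
        linarith
      have : rr a t = -1 := by
        rw [rr_eq_of_gt h, abs_of_neg ht0, div_neg, div_self ht0.ne]
      rw [this]
      apply (hasDerivAt_neg t).congr_of_eventuallyEq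
      filter_upwards [Iio_mem_nhds hta] with x hx
      simp only [mem_Iio] at hx
      have hx0 : x < 0 := lt_trans hx (by linarith)
      rw [hh_eq_abs ha (by rw [abs_of_neg hx0]; linarith), abs_of_neg hx0]

lemma hasDerivAt_rr (ha : 0 < a) (t : ℝ) : HasDerivAt (rr a) (qq a t) t := by
  have ha' := ha.ne'
  have hpoly : ∀ s : ℝ, HasDerivAt (fun x : ℝ => 2*x/a - x*|x|/a^2) (2/a - 2*|s|/a^2) s := by
    intro s
    have h1 : HasDerivAt (fun x : ℝ => 2*x/a) (2/a) s := by
      have := ((hasDerivAt_id s).const_mul (2:ℝ)).div_const a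
      simpa using this
    have h2 := (hasDerivAt_mul_abs s).div_const (a^2)
    exact h1.sub h2
  rcases lt_trichotomy |t| a with h | h | h
  · rw [qq_eq_of_le ha' h.le]
    apply (hpoly t).congr_of_eventuallyEq
    filter_upwards [(isOpen_lt continuous_abs continuous_const).mem_nhds h] with x hx
    exact rr_eq_of_le (le_of_lt hx)
  · rcases (abs_eq ha.le).1 h with h1 | h1
    · rw [h1]
      have hIic : HasDerivWithinAt (rr a) 0 (Iic a) a := by
        have h1' : HasDerivWithinAt (fun x : ℝ => 2*x/a - x*|x|/a^2) 0 (Iic a) a := by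
          have := (hpoly a).hasDerivWithinAt (s := Iic a)
          refine this.congr_deriv ?_
          rw [abs_of_pos ha, sq, mul_div_mul_right _ _ ha', sub_self]
        apply h1'.congr_of_eventuallyEq ?_ (rr_eq_of_le (le_of_eq (abs_of_pos ha)))
        filter_upwards [mem_nhdsWithin_of_mem_nhds (Ioi_mem_nhds (neg_lt_self ha)),
          self_mem_nhdsWithin] with x hx1 hx2
        exact rr_eq_of_le (abs_le.2 ⟨le_of_lt hx1, hx2⟩)
      have hIci : HasDerivWithinAt (rr a) 0 (Ici a) a := by
        apply (hasDerivAt_const a (1:ℝ)).hasDerivWithinAt.congr ?_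
          (by rw [rr_eq_of_le (le_of_eq (abs_of_pos ha)), abs_of_pos ha]; field_simp; ring)
        intro x hx
        have hax : (0:ℝ) < x := lt_of_lt_of_le ha hx
        rcases eq_or_lt_of_le (mem_Ici.1 hx) with hxa | hxa
        · rw [rr_eq_of_le (by rw [abs_of_pos hax, ← hxa]), abs_of_pos hax, ← hxa]
          field_simp; ring
        · rw [rr_eq_of_gt (by rwa [abs_of_pos hax]), abs_of_pos hax, div_self hax.ne']
      have hu := hIic.union hIci
      rw [Iic_union_Ici, hasDerivWithinAt_univ] at hu
      rwa [qq_eq_zero (le_of_eq (abs_of_pos ha).symm)]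
    · rw [h1]
      have hIci : HasDerivWithinAt (rr a) 0 (Ici (-a)) (-a) := by
        have h1' : HasDerivWithinAt (fun x : ℝ => 2*x/a - x*|x|/a^2) 0 (Ici (-a)) (-a) := by
          have := (hpoly (-a)).hasDerivWithinAt (s := Ici (-a))
          refine this.congr_deriv ?_
          rw [abs_neg, abs_of_pos ha, sq, mul_div_mul_right _ _ ha', sub_self]
        apply h1'.congr_of_eventuallyEq ?_ (rr_eq_of_le (by rw [abs_neg, abs_of_pos ha]))
        filter_upwards [mem_nhdsWithin_of_mem_nhds (Iio_mem_nhds (neg_lt_self ha)),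
          self_mem_nhdsWithin] with x hx1 hx2
        exact rr_eq_of_le (abs_le.2 ⟨hx2, le_of_lt hx1⟩)
      have hIic : HasDerivWithinAt (rr a) 0 (Iic (-a)) (-a) := by
        apply (hasDerivAt_const (-a) (-1:ℝ)).hasDerivWithinAt.congr ?_
          (by rw [rr_eq_of_le (by rw [abs_neg, abs_of_pos ha]), abs_neg, abs_of_pos ha]
              field_simp; ring)
        intro x hx
        simp only [mem_Iic] at hx
        have hx0 : x < 0 := lt_of_le_of_lt hx (by linarith)
        rcases eq_or_lt_of_le hx with hxa | hxa
        · rw [rr_eq_of_le (by rw [hxa, abs_neg, abs_of_pos ha]), hxa, abs_neg, abs_of_pos ha]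
          field_simp; ring
        · rw [rr_eq_of_gt (by rw [abs_of_neg hx0]; linarith), abs_of_neg hx0, div_neg,
            div_self hx0.ne]
      have hu := hIic.union hIci
      rw [Iic_union_Ici, hasDerivWithinAt_univ] at hu
      rwa [qq_eq_zero (by rw [abs_neg, abs_of_pos ha])]
  · rw [qq_eq_zero h.le]
    rcases lt_trichotomy 0 t with ht | ht | ht0
    · have hta : a < t := by rwa [abs_of_pos ht] at h
      apply (hasDerivAt_const t (1:ℝ)).congr_of_eventuallyEq
      filter_upwards [Ioi_mem_nhds hta] with x hx
      simp only [mem_Ioi] at hx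
      have hx0 : (0:ℝ) < x := lt_trans ha hx
      rw [rr_eq_of_gt (by rwa [abs_of_pos hx0]), abs_of_pos hx0, div_self hx0.ne']
    · rw [← ht, abs_zero] at h
      linarith
    · have hta : t < -a := by
        rw [abs_of_neg ht0] at h
        linarith
      apply (hasDerivAt_const t (-1:ℝ)).congr_of_eventuallyEq
      filter_upwards [Iio_mem_nhds hta] with x hx
      simp only [mem_Iio] at hx
      have hx0 : x < 0 := lt_trans hx (by linarith)
      rw [rr_eq_of_gt (by rw [abs_of_neg hx0]; linarith), abs_of_neg hx0, div_neg,
        div_self hx0.ne]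

lemma continuous_qq : Continuous (qq a) := by
  unfold qq
  exact (continuous_const.mul ((continuous_const.sub continuous_abs).max
    continuous_const)).div_const _

lemma contDiff_hh (ha : 0 < a) : ContDiff ℝ 2 (hh a) := by
  have e1 : deriv (hh a) = rr a := funext fun s => (hasDerivAt_hh ha s).deriv
  have e2 : deriv (rr a) = qq a := funext fun s => (hasDerivAt_rr ha s).deriv
  rw [show (2 : WithTop ℕ∞) = 1 + 1 from by norm_num, contDiff_succ_iff_deriv]
  refine ⟨fun s => (hasDerivAt_hh ha s).differentiableAt, by simp, ?_⟩
  rw [e1, contDiff_one_iff_deriv, e2]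
  exact ⟨fun s => (hasDerivAt_rr ha s).differentiableAt, continuous_qq⟩


variable {a t s : ℝ}

lemma hh_lb (ha : 0 < a) (t : ℝ) : a/3 ≤ hh a t := by
  unfold hh
  split_ifs with h
  · unfold cub
    have h0 := abs_nonneg t
    have h2 : t^2 = |t|^2 := (sq_abs t).symm
    have h3 : |t|^3/(3*a^2) ≤ |t|^2/a := by
      rw [div_le_div_iff₀ (by positivity) ha]
      nlinarith [mul_nonneg (mul_nonneg (sq_nonneg |t|) ha.le) (by linarith : (0:ℝ) ≤ 3*a - |t|)]
    rw [h2]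
    linarith
  · push_neg at h
    linarith

lemma hh_ub (ha : 0 < a) (ha3 : a ≤ 1/3) (h1 : |t| ≤ 1) : hh a t ≤ 1 := by
  unfold hh
  split_ifs with h
  · unfold cub
    have h0 := abs_nonneg t
    have h2 : t^2/a ≤ a := by
      rw [div_le_iff₀ ha]
      nlinarith [sq_abs t]
    have h3 : 0 ≤ |t|^3/(3*a^2) := by positivity
    linarith
  · exact h1

lemma hasDerivAt_ff (hs : 0 < s + 2) : HasDerivAt ff (fd s) s := by
  have hlog : HasDerivAt (fun x : ℝ => Real.log (x + 2)) (1/(s+2)) s := by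
    have h1 : HasDerivAt (fun x : ℝ => x + 2) 1 s := (hasDerivAt_id s).add_const 2
    have := (Real.hasDerivAt_log hs.ne').comp s h1
    exact this.congr_deriv (by rw [mul_one, one_div])
  have hid : HasDerivAt (fun x : ℝ => x) 1 s := hasDerivAt_id s
  have h2 := hid.mul hlog
  have h3 : HasDerivAt ff (1 * Real.log (s + 2) + s * (1/(s+2))) s := h2
  have h4 : (1:ℝ) * Real.log (s+2) + s * (1/(s+2)) = fd s := by
    unfold fd; rw [one_mul, mul_one_div]
  rwa [h4] at h3

lemma hasDerivAt_fd (hs : 0 < s + 2) : HasDerivAt fd (fdd s) s := by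
  have hlog : HasDerivAt (fun x : ℝ => Real.log (x + 2)) (1/(s+2)) s := by
    have h1 : HasDerivAt (fun x : ℝ => x + 2) 1 s := (hasDerivAt_id s).add_const 2
    have := (Real.hasDerivAt_log hs.ne').comp s h1
    exact this.congr_deriv (by rw [mul_one, one_div])
  have hdiv : HasDerivAt (fun x : ℝ => x/(x+2)) (2/(s+2)^2) s := by
    have := (hasDerivAt_id s).div ((hasDerivAt_id s).add_const 2) hs.ne'
    exact this.congr_deriv (by simp only [id_eq]; ring)
  have h2 := hlog.add hdiv
  exact h2

lemma contDiffAt_ff (hs : s + 2 ≠ 0) : ContDiffAt ℝ 2 ff s := by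
  have h1 : ContDiffAt ℝ 2 (fun x : ℝ => Real.log (x + 2)) s :=
    (Real.contDiffAt_log.2 hs).comp s (contDiffAt_id.add contDiffAt_const)
  exact contDiffAt_id.mul h1

lemma fd_nonneg (hs : 0 ≤ s) : 0 ≤ fd s := by
  unfold fd
  have h1 : 0 ≤ Real.log (s+2) := Real.log_nonneg (by linarith)
  have h2 : 0 ≤ s/(s+2) := div_nonneg hs (by linarith)
  linarith

lemma fd_le (hs0 : 0 ≤ s) (hs1 : s ≤ 1) : fd s ≤ 3 := by
  unfold fd
  have h1 : Real.log (s+2) ≤ (s+2) - 1 := Real.log_le_sub_one_of_pos (by linarith)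
  have h2 : s/(s+2) ≤ 1 := (div_le_one (by linarith)).2 (by linarith)
  linarith

lemma fd_ge_log2 (hs : 0 ≤ s) : Real.log 2 ≤ fd s := by
  unfold fd
  have h1 : Real.log 2 ≤ Real.log (s+2) :=
    Real.log_le_log (by norm_num) (by linarith)
  have h2 : 0 ≤ s/(s+2) := div_nonneg hs (by linarith)
  linarith

lemma fdd_lb (hs0 : 0 ≤ s) (hs1 : s ≤ 1) : 5/9 ≤ fdd s := by
  unfold fdd
  have h1 : (1:ℝ)/3 ≤ 1/(s+2) := by
    rw [div_le_div_iff₀ (by norm_num) (by linarith)]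
    linarith
  have h2 : (2:ℝ)/9 ≤ 2/(s+2)^2 := by
    rw [div_le_div_iff₀ (by norm_num) (by positivity)]
    nlinarith
  linarith

lemma fdd_nonneg (hs : 0 < s + 2) : 0 ≤ fdd s :=
  add_nonneg (le_of_lt (div_pos one_pos hs)) (div_nonneg (by norm_num) (sq_nonneg _))

lemma rr_abs_le (ha : 0 < a) (t : ℝ) : |rr a t| ≤ 1 := by
  rcases le_or_gt |t| a with h | h
  · have he : rr a t = (2*t*a - t*|t|)/a^2 := by
      rw [rr_eq_of_le h]; field_simp
    rw [he, abs_le]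
    constructor
    · rw [le_div_iff₀ (by positivity)]
      rcases abs_cases t with ⟨h1, h2⟩ | ⟨h1, h2⟩ <;> rw [h1] at h ⊢ <;> nlinarith
    · rw [div_le_iff₀ (by positivity)]
      rcases abs_cases t with ⟨h1, h2⟩ | ⟨h1, h2⟩ <;> rw [h1] at h ⊢ <;> nlinarith
  · have ht : t ≠ 0 := by
      intro h0; rw [h0, abs_zero] at h; linarith
    rw [rr_eq_of_gt h, abs_div, abs_abs, div_self (abs_ne_zero.2 ht)]

lemma rr_sq_one (ha : 0 < a) (h : a < |t|) : rr a t * rr a t = 1 := by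
  have ht : t ≠ 0 := by
    intro h0; rw [h0, abs_zero] at h; linarith
  rw [rr_eq_of_gt h, div_mul_div_comm, ← sq, ← sq, sq_abs,
    div_self (pow_ne_zero 2 ht)]

lemma main_bundle (a : ℝ) (ha : 0 < a) (ha3 : a ≤ 1/3) :
    ContDiff ℝ 2 (fun t => ff (hh a t)) ∧
    ConvexOn ℝ Set.univ (fun t => ff (hh a t)) ∧
    (∀ t : ℝ, a ≤ |t| → ff (hh a t) = |t| * Real.log (|t| + 2)) ∧
    (∀ t ∈ Icc (-1:ℝ) 1, 1/3 ≤ iteratedDeriv 2 (fun t => ff (hh a t)) t) ∧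
    (∀ t ∈ Icc (-1:ℝ) 1, |deriv (fun t => ff (hh a t)) t| ≤ 4) := by
  have hpos : ∀ t, 0 < hh a t + 2 := fun t => by have := hh_lb ha t; linarith
  have hnn : ∀ t, 0 ≤ hh a t := fun t => by have := hh_lb ha t; linarith
  have hDG : ∀ t, HasDerivAt (fun t => ff (hh a t)) (fd (hh a t) * rr a t) t := fun t =>
    (hasDerivAt_ff (hpos t)).comp t (hasDerivAt_hh ha t)
  have hderiv : deriv (fun t => ff (hh a t)) = fun t => fd (hh a t) * rr a t :=
    funext fun t => (hDG t).deriv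
  have hD2 : ∀ t, HasDerivAt (fun t => fd (hh a t) * rr a t)
      (fdd (hh a t) * rr a t * rr a t + fd (hh a t) * qq a t) t := by
    intro t
    have h1 : HasDerivAt (fun t => fd (hh a t)) (fdd (hh a t) * rr a t) t :=
      (hasDerivAt_fd (hpos t)).comp t (hasDerivAt_hh ha t)
    exact h1.mul (hasDerivAt_rr ha t)
  have hderiv2 : deriv (deriv (fun t => ff (hh a t)))
      = fun t => fdd (hh a t) * rr a t * rr a t + fd (hh a t) * qq a t := by
    rw [hderiv]; exact funext fun t => (hD2 t).deriv
  refine ⟨?_, ?_, ?_, ?_, ?_⟩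
  · exact contDiff_iff_contDiffAt.2 fun t =>
      (contDiffAt_ff (hpos t).ne').comp t (contDiff_hh ha).contDiffAt
  · apply convexOn_of_deriv2_nonneg' convex_univ
    · exact fun x _ => (hDG x).differentiableAt.differentiableWithinAt
    · rw [hderiv]
      exact fun x _ => (hD2 x).differentiableAt.differentiableWithinAt
    · intro x _
      show 0 ≤ deriv (deriv (fun t => ff (hh a t))) x
      rw [hderiv2]
      show 0 ≤ fdd (hh a x) * rr a x * rr a x + fd (hh a x) * qq a x
      have h1 : 0 ≤ fdd (hh a x) := fdd_nonneg (hpos x)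
      have h2 : 0 ≤ rr a x * rr a x := mul_self_nonneg _
      have h3 : 0 ≤ fd (hh a x) := fd_nonneg (hnn x)
      have h4 : 0 ≤ qq a x := by unfold qq; positivity
      nlinarith [mul_nonneg h1 h2, mul_nonneg h3 h4]
  · intro t hta
    rw [hh_eq_abs ha hta]
    rfl
  · intro t htI
    have ht1 : |t| ≤ 1 := abs_le.2 ⟨htI.1, htI.2⟩
    have hs0 : 0 ≤ hh a t := hnn t
    have hs1 : hh a t ≤ 1 := hh_ub ha ha3 ht1
    have hfdd : 5/9 ≤ fdd (hh a t) := fdd_lb hs0 hs1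
    have hfd0 : 0 ≤ fd (hh a t) := fd_nonneg hs0
    have hfd : Real.log 2 ≤ fd (hh a t) := fd_ge_log2 hs0
    have hlog2 : (0.6931471803 : ℝ) < Real.log 2 := Real.log_two_gt_d9
    rw [iteratedDeriv_succ, iteratedDeriv_one, hderiv2]
    show (1:ℝ)/3 ≤ fdd (hh a t) * rr a t * rr a t + fd (hh a t) * qq a t
    rcases le_or_gt |t| a with h | h
    · have h4 : 0 ≤ qq a t := by unfold qq; positivity
      rcases le_or_gt |t| (3*a/5) with h5 | h5
      · -- qq large
        have hq : 12/5 ≤ qq a t := by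
          rw [qq_eq_of_le ha.ne' h]
          have he : 2/a - 2*|t|/a^2 = (2*a - 2*|t|)/a^2 := by field_simp
          rw [he, le_div_iff₀ (by positivity)]
          nlinarith [abs_nonneg t]
        have h1 : 0 ≤ fdd (hh a t) * rr a t * rr a t := by
          nlinarith [fdd_nonneg (hpos t), mul_self_nonneg (rr a t)]
        have h2 : Real.log 2 * (12/5) ≤ fd (hh a t) * qq a t :=
          mul_le_mul hfd hq (by norm_num) hfd0
        nlinarith
      · -- rr large
        have hqnn : 0 ≤ fd (hh a t) * qq a t := mul_nonneg hfd0 h4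
        have he : rr a t = (2*t*a - t*|t|)/a^2 := by
          rw [rr_eq_of_le h]; field_simp
        have hee : (21/25 : ℝ)*(21/25) ≤ rr a t * rr a t := by
          rcases abs_cases t with ⟨h1, h2⟩ | ⟨h1, h2⟩
          · have hge : 21/25 ≤ rr a t := by
              rw [he, h1, le_div_iff₀ (by positivity)]
              rw [h1] at h h5
              nlinarith [mul_nonneg (by linarith : (0:ℝ) ≤ t - 3*a/5)
                (by linarith : (0:ℝ) ≤ 7*a/5 - t)]
            nlinarith
          · have hge : rr a t ≤ -(21/25) := by
              rw [he, h1, div_le_iff₀ (by positivity)]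
              rw [h1] at h h5
              nlinarith [mul_nonneg (by linarith : (0:ℝ) ≤ -t - 3*a/5)
                (by linarith : (0:ℝ) ≤ 7*a/5 + t)]
            nlinarith
        have h9 : 5/9*((21/25:ℝ)*(21/25)) ≤ fdd (hh a t) * (rr a t * rr a t) :=
          mul_le_mul hfdd hee (by norm_num) (by linarith)
        nlinarith
    · have hsq : fdd (hh a t) * rr a t * rr a t = fdd (hh a t) := by
        rw [mul_assoc, rr_sq_one ha h, mul_one]
      rw [qq_eq_zero h.le, mul_zero, add_zero, hsq]
      linarith
  · intro t htI
    have ht1 : |t| ≤ 1 := abs_le.2 ⟨htI.1, htI.2⟩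
    have hs0 : 0 ≤ hh a t := hnn t
    have hs1 : hh a t ≤ 1 := hh_ub ha ha3 ht1
    rw [hderiv]
    show |fd (hh a t) * rr a t| ≤ 4
    have h1 := rr_abs_le ha t
    have h2 := fd_le hs0 hs1
    have h3 := fd_nonneg hs0
    calc |fd (hh a t) * rr a t| = fd (hh a t) * |rr a t| := by
          rw [abs_mul, abs_of_nonneg h3]
      _ ≤ 3 * 1 := mul_le_mul h2 h1 (abs_nonneg _) (by norm_num)
      _ ≤ 4 := by norm_num

/-- Let `g t = |t| log(|t| + 2)`. For every integer `k ≥ 3` there is a convex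
`C²` function `g_k : ℝ → ℝ` with `g_k = g` on `{|t| ≥ 1/k}`, `g_k'' ≥ 1/3` on `[-1,1]` and
`|g_k'| ≤ 4` on `[-1,1]`; in particular the `g_k` converge pointwise to `g`. -/
theorem smooth_convex_approx_of_abs_log :
    ∃ G : ℕ → ℝ → ℝ,
      (∀ k : ℕ, 3 ≤ k →
        ContDiff ℝ 2 (G k) ∧
        ConvexOn ℝ Set.univ (G k) ∧
        (∀ t : ℝ, 1 / (k : ℝ) ≤ |t| → G k t = |t| * Real.log (|t| + 2)) ∧
        (∀ t ∈ Icc (-1 : ℝ) 1, 1 / 3 ≤ iteratedDeriv 2 (G k) t) ∧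
        (∀ t ∈ Icc (-1 : ℝ) 1, |deriv (G k) t| ≤ 4)) ∧
      (∀ t : ℝ, Tendsto (fun k => G k t) atTop (nhds (|t| * Real.log (|t| + 2)))) := by
  have hpos : ∀ k : ℕ, (0:ℝ) < ((max k 3 : ℕ):ℝ)⁻¹ := fun k => by
    have h3 : (0:ℕ) < max k 3 := lt_of_lt_of_le (by norm_num) (le_max_right _ _)
    have : (0:ℝ) < ((max k 3 : ℕ):ℝ) := by exact_mod_cast h3
    exact inv_pos.2 this
  refine ⟨fun k t => ff (hh (((max k 3 : ℕ) : ℝ))⁻¹ t), ?_, ?_⟩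
  · intro k hk
    simp only [max_eq_left hk]
    have hkR : (3:ℝ) ≤ (k:ℝ) := by exact_mod_cast hk
    have hk0 : (0:ℝ) < (k:ℝ)⁻¹ := inv_pos.2 (by linarith)
    have hk3 : ((k:ℝ))⁻¹ ≤ 1/3 := by
      rw [one_div]
      exact inv_anti₀ (by norm_num) hkR
    obtain ⟨h1, h2, h3, h4, h5⟩ := main_bundle _ hk0 hk3
    exact ⟨h1, h2, fun t ht => h3 t (by rwa [one_div] at ht), h4, h5⟩
  · intro t
    rcases eq_or_ne t 0 with rfl | ht
    · have hval : ∀ k : ℕ, ff (hh ((max k 3:ℕ):ℝ)⁻¹ 0) = ff (((max k 3:ℕ):ℝ)⁻¹/3) := by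
        intro k
        congr 1
        rw [hh_eq_of_le (by rw [abs_zero]; exact (hpos k).le)]
        unfold cub
        norm_num
      have htend0 : Tendsto (fun k : ℕ => ((max k 3:ℕ):ℝ)⁻¹) atTop (𝓝 0) := by
        apply Tendsto.inv_tendsto_atTop
        apply tendsto_natCast_atTop_atTop.comp
        exact tendsto_atTop_mono (fun k => le_max_left k 3) tendsto_id
      have htend : Tendsto (fun k : ℕ => ((max k 3:ℕ):ℝ)⁻¹/3) atTop (𝓝 (0/3)) :=
        htend0.div_const 3
      rw [zero_div] at htend
      have hcont : ContinuousAt ff 0 := by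
        apply ContinuousAt.mul continuousAt_id
        exact (Real.continuousAt_log (by norm_num)).comp (continuousAt_id.add continuousAt_const)
      have hmain := (hcont.tendsto.comp htend).congr (fun k => (hval k).symm)
      have : |(0:ℝ)| * Real.log (|(0:ℝ)| + 2) = ff 0 := by simp [ff]
      rw [this]
      exact hmain
    · have habs : 0 < |t| := abs_pos.2 ht
      have hev : ∀ᶠ k : ℕ in atTop,
          ff (hh ((max k 3:ℕ):ℝ)⁻¹ t) = |t| * Real.log (|t| + 2) := by
        have h1 : ∀ᶠ k : ℕ in atTop, (|t|)⁻¹ ≤ (k:ℝ) := by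
          obtain ⟨N, hN⟩ := exists_nat_ge (|t|)⁻¹
          filter_upwards [eventually_ge_atTop N] with k hk
          exact hN.trans (by exact_mod_cast hk)
        filter_upwards [h1] with k hk
        have h2 : (|t|)⁻¹ ≤ ((max k 3:ℕ):ℝ) :=
          hk.trans (by exact_mod_cast le_max_left k 3)
        have h3 : ((max k 3:ℕ):ℝ)⁻¹ ≤ |t| := by
          have := inv_anti₀ (inv_pos.2 habs) h2
          rwa [inv_inv] at this
        rw [hh_eq_abs (hpos k) h3]
        rfl
      rw [tendsto_congr' hev]
      exact tendsto_const_nhds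
end

section
/- Let θ' > 0 and let Φ : cl D → ℂ be continuous on the closed unit disc, holomorphic on D, of class C¹ up to the boundary, and satisfy: |Φ(z)| ≤ 1 for all z ∈ cl D; Φ(1) = 1; |Φ(e^{iθ})| = 1 for all |θ| ≤ θ'; and Φ'(1) ≠ 0 (the derivative of Φ at the boundary point 1, obtained by continuous extension of Φ' from D). Then Φ'(1) is a positive real number. -/
open Set Real Complex Filter Topology

/-- Let `Φ` be continuous on the closed unit disc, holomorphic on the open
disc, and `C¹` up to the boundary (its derivative extends continuously to the closed disc as a
function `g`). If `|Φ| ≤ 1` on the closed disc, `Φ(1) = 1`, `|Φ(e^{iθ})| = 1` for `|θ| ≤ θ'`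
(with `θ' > 0`) and `Φ'(1) ≠ 0`, then `Φ'(1)` is a positive real number. -/
theorem deriv_at_boundary_fixed_point_pos (θ' : ℝ) (hθ' : 0 < θ') (Φ g : ℂ → ℂ)
    (hcont : ContinuousOn Φ (closure (Metric.ball (0 : ℂ) 1)))
    (hholo : DifferentiableOn ℂ Φ (Metric.ball (0 : ℂ) 1))
    (hgcont : ContinuousOn g (closure (Metric.ball (0 : ℂ) 1)))
    (hgext : ∀ z ∈ Metric.ball (0 : ℂ) 1, deriv Φ z = g z)
    (hbound : ∀ z ∈ closure (Metric.ball (0 : ℂ) 1), ‖Φ z‖ ≤ 1)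
    (hfix : Φ 1 = 1)
    (hmod : ∀ θ : ℝ, |θ| ≤ θ' → ‖Φ (Complex.exp (θ * Complex.I))‖ = 1)
    (hne : g 1 ≠ 0) :
    (g 1).im = 0 ∧ 0 < (g 1).re := by
  set s := Metric.ball (0:ℂ) 1 with hs
  have hclos : closure s = Metric.closedBall (0:ℂ) 1 := closure_ball 0 one_ne_zero
  have h1mem : (1:ℂ) ∈ closure s := by
    rw [hclos]; simp [Metric.mem_closedBall]
  set f' : ℂ →L[ℝ] ℂ := ((1 : ℂ →L[ℂ] ℂ).smulRight (g 1)).restrictScalars ℝ with hf'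
  have hdiffR : DifferentiableOn ℝ Φ s := hholo.restrictScalars ℝ
  have hfd : ∀ y ∈ s, fderiv ℝ Φ y = ((1 : ℂ →L[ℂ] ℂ).smulRight (g y)).restrictScalars ℝ := by
    intro y hy
    have hy0 : HasDerivAt Φ (g y) y := by
      have := (hholo.differentiableAt (Metric.isOpen_ball.mem_nhds hy)).hasDerivAt
      rwa [hgext y hy] at this
    exact (hy0.hasFDerivAt.restrictScalars ℝ).fderiv
  have hcontmap : Continuous fun a : ℂ => ((1 : ℂ →L[ℂ] ℂ).smulRight a).restrictScalars ℝ :=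
    (ContinuousLinearMap.restrictScalarsIsometry ℂ ℂ ℂ ℝ ℝ).continuous.comp
      (ContinuousLinearMap.smulRightL ℂ ℂ ℂ (1 : ℂ →L[ℂ] ℂ)).continuous
  have hgt : Tendsto g (𝓝[s] 1) (𝓝 (g 1)) := (hgcont 1 h1mem).mono subset_closure
  have htend : Tendsto (fun y => fderiv ℝ Φ y) (𝓝[s] 1) (𝓝 f') := by
    have h1 : Tendsto (fun y => ((1 : ℂ →L[ℂ] ℂ).smulRight (g y)).restrictScalars ℝ)
        (𝓝[s] 1) (𝓝 f') := (hcontmap.tendsto (g 1)).comp hgt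
    refine h1.congr' ?_
    filter_upwards [self_mem_nhdsWithin] with y hy
    exact (hfd y hy).symm
  have hF : HasFDerivWithinAt Φ f' (closure s) 1 :=
    hasFDerivWithinAt_closure_of_tendsto_fderiv hdiffR (convex_ball _ _) Metric.isOpen_ball
      (fun y hy => (hcont y hy).mono subset_closure) htend
  have hf'apply : ∀ v : ℂ, f' v = v * g 1 := by
    intro v; simp [hf', smul_eq_mul]
  -- tangential part
  have hc1 : HasDerivAt (fun θ:ℝ => (θ:ℂ) * I) I 0 := by
    simpa using (hasDerivAt_id (0:ℝ)).ofReal_comp.mul_const I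
  have hexp : HasDerivAt (fun θ:ℝ => Complex.exp ((θ:ℂ) * I)) I 0 := by
    simpa using hc1.cexp
  have hmaps : MapsTo (fun θ:ℝ => Complex.exp ((θ:ℂ)*I)) univ (closure s) := by
    intro θ _
    rw [hclos]
    simp [Metric.mem_closedBall, dist_zero_right, Complex.norm_exp]
  have h0 : Complex.exp (((0:ℝ):ℂ) * I) = 1 := by simp
  have hD : HasDerivAt (fun θ:ℝ => Φ (Complex.exp ((θ:ℂ)*I))) (I * g 1) 0 := by
    have hF0 : HasFDerivWithinAt Φ f' (closure s) ((fun θ:ℝ => Complex.exp ((θ:ℂ)*I)) 0) := by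
      simpa [h0] using hF
    have := hF0.comp_hasDerivWithinAt (0:ℝ) (hexp.hasDerivWithinAt (s := univ)) hmaps
    rw [hasDerivWithinAt_univ] at this
    simpa [hf'apply, Function.comp_def] using this
  have hDre : HasDerivAt (fun θ:ℝ => (Φ (Complex.exp ((θ:ℂ)*I))).re) (I * g 1).re 0 :=
    Complex.reCLM.hasFDerivAt.comp_hasDerivAt 0 hD
  have hDim : HasDerivAt (fun θ:ℝ => (Φ (Complex.exp ((θ:ℂ)*I))).im) (I * g 1).im 0 :=
    Complex.imCLM.hasFDerivAt.comp_hasDerivAt 0 hD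
  have hN : HasDerivAt (fun θ:ℝ => (Φ (Complex.exp ((θ:ℂ)*I))).re * (Φ (Complex.exp ((θ:ℂ)*I))).re
      + (Φ (Complex.exp ((θ:ℂ)*I))).im * (Φ (Complex.exp ((θ:ℂ)*I))).im)
      ((I * g 1).re * (Φ (Complex.exp (((0:ℝ):ℂ)*I))).re
        + (Φ (Complex.exp (((0:ℝ):ℂ)*I))).re * (I * g 1).re
      + ((I * g 1).im * (Φ (Complex.exp (((0:ℝ):ℂ)*I))).im
        + (Φ (Complex.exp (((0:ℝ):ℂ)*I))).im * (I * g 1).im)) 0 :=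
    (hDre.mul hDre).add (hDim.mul hDim)
  have hEv : (fun θ:ℝ => (Φ (Complex.exp ((θ:ℂ)*I))).re * (Φ (Complex.exp ((θ:ℂ)*I))).re
      + (Φ (Complex.exp ((θ:ℂ)*I))).im * (Φ (Complex.exp ((θ:ℂ)*I))).im) =ᶠ[𝓝 (0:ℝ)]
      fun _ => 1 := by
    filter_upwards [Ioo_mem_nhds (by linarith : -θ' < (0:ℝ)) hθ'] with θ hθ
    have habs := hmod θ (abs_le.2 ⟨hθ.1.le, hθ.2.le⟩)
    have hnsq : Complex.normSq (Φ (Complex.exp ((θ:ℂ)*I))) = 1 := by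
      rw [Complex.normSq_eq_norm_sq, habs]; norm_num
    simpa [Complex.normSq_apply] using hnsq
  have hzero : HasDerivAt (fun θ:ℝ => (Φ (Complex.exp ((θ:ℂ)*I))).re * (Φ (Complex.exp ((θ:ℂ)*I))).re
      + (Φ (Complex.exp ((θ:ℂ)*I))).im * (Φ (Complex.exp ((θ:ℂ)*I))).im) 0 0 :=
    (hasDerivAt_const (0:ℝ) (1:ℝ)).congr_of_eventuallyEq hEv
  have huniq := hN.unique hzero
  rw [h0, hfix] at huniq
  simp [Complex.mul_re, Complex.mul_im] at huniq
  have him : (g 1).im = 0 := by linarith [huniq]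
  -- radial part
  have hc2 : HasDerivWithinAt (fun r:ℝ => (r:ℂ)) 1 (Icc 0 1) 1 := by
    simpa using ((hasDerivAt_id (1:ℝ)).ofReal_comp).hasDerivWithinAt
  have hmaps2 : MapsTo (fun r:ℝ => (r:ℂ)) (Icc (0:ℝ) 1) (closure s) := by
    intro r hr
    rw [hclos]
    simp only [Metric.mem_closedBall, dist_zero_right, Complex.norm_real, Real.norm_eq_abs]
    exact abs_le.2 ⟨by linarith [hr.1], hr.2⟩
  have hR : HasDerivWithinAt (fun r:ℝ => Φ r) (g 1) (Icc 0 1) 1 := by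
    have hF1 : HasFDerivWithinAt Φ f' (closure s) ((fun r:ℝ => (r:ℂ)) 1) := by
      simpa using hF
    have := hF1.comp_hasDerivWithinAt (1:ℝ) hc2 hmaps2
    simpa [hf'apply, Function.comp_def] using this
  have hRre : HasDerivWithinAt (fun r:ℝ => (Φ r).re) (g 1).re (Icc 0 1) 1 :=
    Complex.reCLM.hasFDerivAt.comp_hasDerivWithinAt 1 hR
  have hslope := hasDerivWithinAt_iff_tendsto_slope.1 hRre
  have hnb : (𝓝[Icc (0:ℝ) 1 \ {1}] 1).NeBot := by
    have hsub : Ico (0:ℝ) 1 ⊆ Icc 0 1 \ {1} := fun r hr =>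
      ⟨⟨hr.1, hr.2.le⟩, fun h => absurd h (ne_of_lt hr.2)⟩
    have : 𝓝[Ico (0:ℝ) 1] 1 ≤ 𝓝[Icc (0:ℝ) 1 \ {1}] 1 := nhdsWithin_mono 1 hsub
    exact (right_nhdsWithin_Ico_neBot (by norm_num)).mono this
  have hge : 0 ≤ (g 1).re := by
    refine ge_of_tendsto hslope ?_
    filter_upwards [self_mem_nhdsWithin] with r hr
    have hrle : r < 1 := lt_of_le_of_ne hr.1.2 (fun h => hr.2 h)
    have hub : (Φ r).re ≤ 1 := by
      calc (Φ r).re ≤ ‖Φ r‖ := Complex.re_le_norm _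
        _ ≤ 1 := hbound _ (hmaps2 hr.1)
    have hu1 : ((fun r:ℝ => (Φ r).re) 1) = 1 := by
      simp [hfix]
    rw [slope_def_field]
    rw [div_nonneg_iff]
    right
    constructor
    · simp only [hu1]
      linarith
    · linarith
  refine ⟨him, lt_of_le_of_ne hge ?_⟩
  intro h
  exact hne (Complex.ext h.symm him)
end
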